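/- Let G be a profinite group and (N_n)_{n ≥ 1} a decreasing sequence of open normal subgroups with ⋂_n N_n = {1}. Suppose that for each n the quotient G/N_n is isomorphic, as a group, to a dihedral group of order 2^{m_n + 1}, where m_n → +∞. Then G contains an open abelian subgroup which is topologically isomorphic to the additive group ℤ₂ of 2-adic integers. -/

import Mathlib

open Filter Pointwise

namespace Z2DihedralAux

open DihedralGroup

/-- The rotation angle of a dihedral group element (junk value `0` on reflections). -/
def ang {n : ℕ} : DihedralGroup n → ZMod n
  | .r i => i
  | .sr _ => 0

@[simp] lemma ang_r {n : ℕ} (i : ZMod n) : ang (r i) = i := rfl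
@[simp] lemma ang_sr {n : ℕ} (i : ZMod n) : ang (sr i) = 0 := rfl

lemma r_inv {n : ℕ} (a : ZMod n) : (r a : DihedralGroup n)⁻¹ = r (-a) := by
  apply inv_eq_of_mul_eq_one_right
  rw [r_mul_r, add_neg_cancel, ← one_def]

lemma rpow {B : ℕ} (t : ZMod B) (k : ℕ) : ∃ c : ZMod B, (r t : DihedralGroup B) ^ k = r c := by
  induction k with
  | zero => exact ⟨0, by rw [pow_zero, one_def]⟩
  | succ k ih =>
    obtain ⟨c, hc⟩ := ih
    exact ⟨c + t, by rw [pow_succ, hc, r_mul_r]⟩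

lemma r_eq_pow {A : ℕ} [NeZero A] (a : ZMod A) : (r a : DihedralGroup A) = r 1 ^ a.val := by
  rw [r_one_pow, ZMod.natCast_val, ZMod.cast_id]

lemma psi_r_rot {A B : ℕ} (ψ : DihedralGroup (2 ^ A) →* DihedralGroup (2 ^ B))
    (hsur : Function.Surjective ψ) (h2 : (2 : ZMod (2 ^ B)) ≠ 0) :
    ∃ t, ψ (r 1) = r t := by
  haveI : NeZero (2 ^ A) := ⟨pow_ne_zero _ two_ne_zero⟩
  haveI : NeZero (2 ^ B) := ⟨pow_ne_zero _ two_ne_zero⟩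
  rcases hq : ψ (r 1) with t | j
  · exact ⟨t, rfl⟩
  · exfalso
    have hsq : ∀ x : DihedralGroup (2 ^ A), ψ x * ψ x = 1 := by
      have hu : (sr j : DihedralGroup (2 ^ B)) * sr j = 1 := by
        rw [sr_mul_sr, sub_self, ← one_def]
      rintro (i | i)
      · rw [r_eq_pow i, map_pow, hq, ← pow_add, ← two_mul, pow_mul, pow_two, hu, one_pow]
      · rw [← map_mul, sr_mul_sr, sub_self, ← one_def, map_one]
    obtain ⟨x, hx⟩ := hsur (r 1)
    have h := hsq x
    rw [hx, r_mul_r, one_def] at h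
    have h' : (1 + 1 : ZMod (2 ^ B)) = 0 := by
      exact r.inj h
    rw [one_add_one_eq_two] at h'
    exact h2 h'

lemma psi_r {A B : ℕ} (ψ : DihedralGroup (2 ^ A) →* DihedralGroup (2 ^ B))
    (hsur : Function.Surjective ψ) (h2 : (2 : ZMod (2 ^ B)) ≠ 0)
    (hdvd : (2 : ℕ) ^ B ∣ 2 ^ A) (a : ZMod (2 ^ A)) :
    ψ (r a) = r (ZMod.castHom hdvd (ZMod (2 ^ B)) a * ang (ψ (r 1))) := by
  haveI : NeZero (2 ^ A) := ⟨pow_ne_zero _ two_ne_zero⟩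
  haveI : NeZero (2 ^ B) := ⟨pow_ne_zero _ two_ne_zero⟩
  obtain ⟨t, ht⟩ := psi_r_rot ψ hsur h2
  rw [ht, ang_r, r_eq_pow a, map_pow, ht, r_eq_pow t, ← pow_mul, r_one_pow]
  congr 1
  push_cast
  rw [ZMod.natCast_val, ZMod.natCast_val, ZMod.cast_id, ZMod.castHom_apply]
  exact mul_comm _ _

lemma psi_sr {A B : ℕ} (ψ : DihedralGroup (2 ^ A) →* DihedralGroup (2 ^ B))
    (hsur : Function.Surjective ψ) (h2 : (2 : ZMod (2 ^ B)) ≠ 0) (a : ZMod (2 ^ A)) :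
    ∃ j, ψ (sr a) = sr j := by
  haveI : NeZero (2 ^ A) := ⟨pow_ne_zero _ two_ne_zero⟩
  haveI : NeZero (2 ^ B) := ⟨pow_ne_zero _ two_ne_zero⟩
  obtain ⟨t, ht⟩ := psi_r_rot ψ hsur h2
  have hrot : ∀ b : ZMod (2 ^ A), ∃ c, ψ (r b) = r c := by
    intro b
    obtain ⟨c, hc⟩ := rpow t b.val
    exact ⟨c, by rw [r_eq_pow b, map_pow, ht, hc]⟩
  have hsr0 : ∀ b : ZMod (2 ^ A), (sr b : DihedralGroup (2 ^ A)) = sr 0 * r b := by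
    intro b; rw [sr_mul_r, zero_add]
  rcases hq : ψ (sr 0) with d | d
  · exfalso
    obtain ⟨x, hx⟩ := hsur (sr 0)
    have : ∃ c, (sr 0 : DihedralGroup (2 ^ B)) = r c := by
      rcases x with i | i
      · obtain ⟨c, hc⟩ := hrot i
        exact ⟨c, by rw [← hx, hc]⟩
      · obtain ⟨c, hc⟩ := hrot i
        exact ⟨d + c, by rw [← hx, hsr0 i, map_mul, hq, hc, r_mul_r]⟩
    obtain ⟨c, hc⟩ := this
    simp at hc
  · obtain ⟨c, hc⟩ := hrot a
    exact ⟨d + c, by rw [hsr0 a, map_mul, hq, hc, sr_mul_r]⟩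

lemma m_mono {A B : ℕ} (ψ : DihedralGroup (2 ^ A) →* DihedralGroup (2 ^ B))
    (hsur : Function.Surjective ψ) : B ≤ A := by
  haveI : NeZero (2 ^ A) := ⟨pow_ne_zero _ two_ne_zero⟩
  haveI : NeZero (2 ^ B) := ⟨pow_ne_zero _ two_ne_zero⟩
  have h := Nat.card_le_card_of_surjective ψ hsur
  rw [DihedralGroup.nat_card, DihedralGroup.nat_card] at h
  have h' : (2 : ℕ) ^ B ≤ 2 ^ A := by omega
  exact (Nat.pow_le_pow_iff_right (by norm_num)).mp h'

/-- Preimage of the rotation subgroup. -/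
def rotSubgroup {G : Type*} [Group G] {k : ℕ} (φ : G →* DihedralGroup k) : Subgroup G where
  carrier := {x | ∃ a, φ x = r a}
  one_mem' := ⟨0, by rw [map_one, one_def]⟩
  mul_mem' := by
    rintro x y ⟨a, ha⟩ ⟨b, hb⟩
    exact ⟨a + b, by rw [map_mul, ha, hb, r_mul_r]⟩
  inv_mem' := by
    rintro x ⟨a, ha⟩
    exact ⟨-a, by rw [map_inv, ha, r_inv]⟩

lemma mem_rotSubgroup_iff {G : Type*} [Group G] {k : ℕ} (φ : G →* DihedralGroup k) (x : G) :
    x ∈ rotSubgroup φ ↔ ∃ a, φ x = r a := Iff.rfl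

lemma map_ringInverse {R S : Type*} [CommRing R] [CommRing S] (f : R →+* S) {a : R}
    (ha : IsUnit a) : f (Ring.inverse a) = Ring.inverse (f a) := by
  obtain ⟨u, rfl⟩ := ha
  rw [Ring.inverse_unit]
  have h1 : f ↑u = ↑(Units.map (f : R →* S) u) := rfl
  have h2 : f ↑u⁻¹ = ↑(Units.map (f : R →* S) u)⁻¹ := rfl
  rw [h2, h1, Ring.inverse_unit]

lemma inv_mul_shift {R : Type*} [CommRing R] {B t C : R} (hB : IsUnit B) (ht : IsUnit t) :
    Ring.inverse (B * t) * (C * t) = Ring.inverse B * C := by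
  rw [Ring.mul_inverse_rev]
  calc Ring.inverse t * Ring.inverse B * (C * t)
      = (Ring.inverse t * t) * (Ring.inverse B * C) := by ring
    _ = Ring.inverse B * C := by rw [Ring.inverse_mul_cancel _ ht, one_mul]


def zmodLimit : Subring (∀ k : ℕ, ZMod (2 ^ k)) where
  carrier := {a | ∀ (j k : ℕ) (_ : j ≤ k),
    ZMod.castHom (pow_dvd_pow 2 ‹j ≤ k›) (ZMod (2 ^ j)) (a k) = a j}
  one_mem' := by intro j k h; simp only [Pi.one_apply, map_one]
  mul_mem' := by intro a b ha hb j k h; simp only [Pi.mul_apply, map_mul, ha j k h, hb j k h]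
  add_mem' := by intro a b ha hb j k h; simp only [Pi.add_apply, map_add, ha j k h, hb j k h]
  zero_mem' := by intro j k h; simp only [Pi.zero_apply, map_zero]
  neg_mem' := by intro a ha j k h; simp only [Pi.neg_apply, map_neg, ha j k h]

lemma mem_zmodLimit (a : ∀ k : ℕ, ZMod (2 ^ k)) :
    a ∈ zmodLimit ↔ ∀ (j k : ℕ) (h : j ≤ k),
      ZMod.castHom (pow_dvd_pow 2 h) (ZMod (2 ^ j)) (a k) = a j := Iff.rfl

def zmodLimitHom (k : ℕ) : zmodLimit →+* ZMod (2 ^ k) :=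
  (Pi.evalRingHom _ k).comp zmodLimit.subtype

lemma zmodLimit_compat : ∀ (k1 k2 : ℕ) (hk : k1 ≤ k2),
    (ZMod.castHom (pow_dvd_pow 2 hk) (ZMod (2 ^ k1))).comp (zmodLimitHom k2) =
      zmodLimitHom k1 := by
  intro k1 k2 hk
  ext a
  exact a.2 k1 k2 hk

noncomputable def zmodLimitLift : zmodLimit →+* ℤ_[2] :=
  haveI : Fact (Nat.Prime 2) := ⟨Nat.prime_two⟩
  PadicInt.lift zmodLimit_compat

lemma zmodLimitLift_spec (k : ℕ) (a : zmodLimit) :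
    PadicInt.toZModPow k (zmodLimitLift a) = a.1 k := by
  haveI : Fact (Nat.Prime 2) := ⟨Nat.prime_two⟩
  exact RingHom.congr_fun (PadicInt.lift_spec zmodLimit_compat k) a

theorem aux (G : Type*) [Group G] [TopologicalSpace G]
    [IsTopologicalGroup G] [CompactSpace G] [T2Space G]
    (N : ℕ → Subgroup G) (hopen : ∀ n, IsOpen (N n : Set G))
    (hanti : ∀ n, N (n + 1) ≤ N n)
    (hinter : (⨅ n : ℕ, N n) = ⊥) (m : ℕ → ℕ)
    (hdihedral : ∀ n, ∃ φ : G →* DihedralGroup (2 ^ m n),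
      Function.Surjective φ ∧ φ.ker = N n)
    (hm : Tendsto m atTop atTop) (h2 : ∀ n, 2 ≤ m n) :
    ∃ U : Subgroup G, IsOpen (U : Set G) ∧ (∀ x y : U, x * y = y * x) ∧
      ∃ e : U ≃* Multiplicative ℤ_[2], Continuous e ∧ Continuous e.symm := by
  haveI fact2 : Fact (Nat.Prime 2) := ⟨Nat.prime_two⟩
  choose φ hsur hker using hdihedral
  -- the connecting surjections
  have hlift : ∀ n, ∃ ψ : DihedralGroup (2 ^ m (n + 1)) →* DihedralGroup (2 ^ m n),
      Function.Surjective ψ ∧ ∀ x, ψ (φ (n + 1) x) = φ n x := by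
    intro n
    have hk : (φ (n + 1)).ker ≤ (φ n).ker := by rw [hker, hker]; exact hanti n
    refine ⟨(φ (n + 1)).liftOfSurjective (hsur (n + 1)) ⟨φ n, hk⟩, ?_, ?_⟩
    · intro y
      obtain ⟨x, hx⟩ := hsur n y
      exact ⟨φ (n + 1) x, by simpa using hx⟩
    · intro x
      simpa using MonoidHom.liftOfRightInverse_comp_apply _ _ _ ⟨φ n, hk⟩ x
  choose ψ hψsur hψ using hlift
  have h2Z : ∀ n, (2 : ZMod (2 ^ m n)) ≠ 0 := by
    intro n
    haveI : NeZero (2 ^ m n) := ⟨pow_ne_zero _ two_ne_zero⟩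
    intro h
    have h4 : (4 : ℕ) ≤ 2 ^ m n := by
      calc (4 : ℕ) = 2 ^ 2 := rfl
        _ ≤ 2 ^ m n := Nat.pow_le_pow_right (by norm_num) (h2 n)
    have hdvd : 2 ^ m n ∣ 2 := by
      have : ((2 : ℕ) : ZMod (2 ^ m n)) = 0 := by exact_mod_cast h
      exact (ZMod.natCast_eq_zero_iff 2 (2 ^ m n)).mp this
    have := Nat.le_of_dvd (by norm_num) hdvd
    omega
  have hmono : ∀ n, m n ≤ m (n + 1) := fun n => m_mono (ψ n) (hψsur n)
  have hmle : Monotone m := monotone_nat_of_le_succ hmono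
  -- the common rotation subgroup
  set K : ℕ → Subgroup G := fun n => rotSubgroup (φ n) with hK
  have hKsucc : ∀ n, K (n + 1) = K n := by
    intro n
    ext x
    rw [mem_rotSubgroup_iff, mem_rotSubgroup_iff]
    constructor
    · rintro ⟨a, ha⟩
      refine ⟨ZMod.castHom (pow_dvd_pow 2 (hmono n)) (ZMod (2 ^ m n)) a *
        ang (ψ n (r 1)), ?_⟩
      rw [← hψ n x, ha, psi_r (ψ n) (hψsur n) (h2Z n) (pow_dvd_pow 2 (hmono n)) a]
    · rintro ⟨a, ha⟩
      rcases hq : φ (n + 1) x with b | b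
      · exact ⟨b, rfl⟩
      · exfalso
        obtain ⟨j, hj⟩ := psi_sr (ψ n) (hψsur n) (h2Z n) b
        rw [← hψ n x, hq, hj] at ha
        simp at ha
  have hKeq : ∀ n, K n = K 0 := by
    intro n
    induction n with
    | zero => rfl
    | succ n ih => rw [hKsucc n, ih]
  set H : Subgroup G := K 0 with hH
  have hNH : ∀ n, N n ≤ H := by
    intro n x hx
    rw [← hKeq n]
    refine ⟨0, ?_⟩
    rw [← one_def]
    rw [← hker n] at hx
    exact hx
  have hHopen : IsOpen (H : Set G) := Subgroup.isOpen_mono (hNH 0) (hopen 0)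
  haveI : CompactSpace H :=
    isCompact_iff_compactSpace.mp ((H.isClosed_of_isOpen hHopen).isCompact)
  -- the angle functions
  set c : ∀ n, H → ZMod (2 ^ m n) := fun n x => ang (φ n x.1) with hc
  have hc_r : ∀ n (x : H), φ n x.1 = r (c n x) := by
    intro n x
    have hx : x.1 ∈ K n := by rw [hKeq n]; exact x.2
    obtain ⟨a, ha⟩ := hx
    have e1 : c n x = ang (φ n x.1) := rfl
    rw [e1, ha, ang_r]
  have hc_add : ∀ n (x y : H), c n (x * y) = c n x + c n y := by
    intro n x y
    have h1 : φ n ((x * y : H) : G) = r (c n x + c n y) := by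
      show φ n (x.1 * y.1) = _
      rw [map_mul, hc_r n x, hc_r n y, r_mul_r]
    have e1 : c n (x * y) = ang (φ n ((x * y : H) : G)) := rfl
    rw [e1, h1, ang_r]
  have hc_zero_iff : ∀ n (x : H), c n x = 0 ↔ x.1 ∈ N n := by
    intro n x
    rw [← hker n, MonoidHom.mem_ker]
    constructor
    · intro h
      rw [hc_r n x, h, ← one_def]
    · intro h
      have h1 := hc_r n x
      rw [h, one_def] at h1
      have := r.inj h1
      exact this.symm
  have hc_surj : ∀ n (a : ZMod (2 ^ m n)), ∃ x : H, c n x = a := by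
    intro n a
    obtain ⟨x, hx⟩ := hsur n (r a)
    have hxH : x ∈ H := by rw [← hKeq n]; exact ⟨a, hx⟩
    refine ⟨⟨x, hxH⟩, ?_⟩
    have e1 : c n ⟨x, hxH⟩ = ang (φ n x) := rfl
    rw [e1, hx, ang_r]
  -- the one-step comparison
  have hstep : ∀ n, ∃ t : ZMod (2 ^ m n), IsUnit t ∧
      ∀ x : H, c n x =
        ZMod.castHom (pow_dvd_pow 2 (hmono n)) (ZMod (2 ^ m n)) (c (n + 1) x) * t := by
    intro n
    have hrel : ∀ x : H, c n x =
        ZMod.castHom (pow_dvd_pow 2 (hmono n)) (ZMod (2 ^ m n)) (c (n + 1) x) *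
          ang (ψ n (r 1)) := by
      intro x
      have h1 := hψ n x.1
      rw [hc_r (n + 1) x, psi_r (ψ n) (hψsur n) (h2Z n) (pow_dvd_pow 2 (hmono n)) _,
        hc_r n x] at h1
      exact (r.inj h1).symm
    have hunit : IsUnit (ang (ψ n (r 1))) := by
      obtain ⟨x, hx⟩ := hc_surj n 1
      have h1 := hrel x
      rw [hx] at h1
      exact IsUnit.of_mul_eq_one _ (by rw [mul_comm, ← h1])
    exact ⟨_, hunit, hrel⟩
  choose t htunit hstep using hstep
  -- clopen fibers of c
  have hCopen : ∀ n (P : ZMod (2 ^ m n) → Prop), IsOpen {x : H | P (c n x)} := by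
    intro n P
    have hfib : ∀ v : ZMod (2 ^ m n), IsOpen {x : H | c n x = v} := by
      intro v
      rw [isOpen_iff_mem_nhds]
      rintro x hx
      have hUopen : IsOpen ((Subtype.val : H → G) ⁻¹' (x.1 • (N n : Set G))) :=
        ((hopen n).smul x.1).preimage continuous_subtype_val
      refine Filter.mem_of_superset (hUopen.mem_nhds ?_) ?_
      · show x.1 ∈ x.1 • (N n : Set G)
        rw [Set.mem_smul_set_iff_inv_smul_mem]
        simpa using (N n).one_mem
      · rintro y hy
        have hy' : x.1⁻¹ * y.1 ∈ N n := by
          have := Set.mem_smul_set_iff_inv_smul_mem.mp hy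
          simpa using this
        have hz : ((x⁻¹ * y : H) : G) ∈ N n := hy'
        have h0 : c n (x⁻¹ * y) = 0 := (hc_zero_iff n _).mpr hz
        have h1 := hc_add n x (x⁻¹ * y)
        rw [mul_inv_cancel_left, h0, add_zero] at h1
        show c n y = v
        rw [h1]
        exact hx
    have : {x : H | P (c n x)} = ⋃ v ∈ {v | P v}, {x : H | c n x = v} := by
      ext x
      simp only [Set.mem_setOf_eq, Set.mem_iUnion]
      constructor
      · intro h; exact ⟨c n x, h, rfl⟩
      · rintro ⟨v, hv, he⟩; rw [he]; exact hv
    rw [this]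
    exact isOpen_biUnion fun v _ => hfib v
  have hCclosed : ∀ n (P : ZMod (2 ^ m n) → Prop), IsClosed {x : H | P (c n x)} := by
    intro n P
    rw [← isOpen_compl_iff]
    have : {x : H | P (c n x)}ᶜ = {x : H | ¬ P (c n x)} := rfl
    rw [this]
    exact hCopen n fun v => ¬ P v
  -- a compatible generator
  obtain ⟨h₀, hh₀⟩ : ∃ h₀ : H, ∀ n, IsUnit (c n h₀) := by
    have hne := IsCompact.nonempty_iInter_of_sequence_nonempty_isCompact_isClosed
      (fun n => {x : H | IsUnit (c n x)}) ?_ ?_ ?_ ?_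
    · obtain ⟨x, hx⟩ := hne
      exact ⟨x, fun n => Set.mem_iInter.mp hx n⟩
    · intro n x hx
      simp only [Set.mem_setOf_eq] at hx ⊢
      rw [hstep n x]
      exact (hx.map (ZMod.castHom (pow_dvd_pow 2 (hmono n)) (ZMod (2 ^ m n)))).mul (htunit n)
    · intro n
      obtain ⟨x, hx⟩ := hc_surj n 1
      exact ⟨x, by simp [Set.mem_setOf_eq, hx]⟩
    · exact (hCclosed 0 IsUnit).isCompact
    · intro n
      exact hCclosed n IsUnit
  -- normalized characters
  set d : ∀ n, H → ZMod (2 ^ m n) := fun n x => Ring.inverse (c n h₀) * c n x with hd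
  have hd_step : ∀ n (x : H),
      ZMod.castHom (pow_dvd_pow 2 (hmono n)) (ZMod (2 ^ m n)) (d (n + 1) x) = d n x := by
    intro n x
    have e1 : d (n + 1) x = Ring.inverse (c (n + 1) h₀) * c (n + 1) x := rfl
    have e2 : d n x = Ring.inverse (c n h₀) * c n x := rfl
    rw [e1, e2, map_mul, map_ringInverse _ (hh₀ (n + 1)), hstep n x, hstep n h₀,
      inv_mul_shift ((hh₀ (n + 1)).map _) (htunit n)]
  have hd_le : ∀ {n n' : ℕ} (h : n ≤ n') (x : H),
      ZMod.castHom (pow_dvd_pow 2 (hmle h)) (ZMod (2 ^ m n)) (d n' x) = d n x := by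
    intro n n' h x
    induction n', h using Nat.le_induction with
    | base => rw [ZMod.castHom_apply, ZMod.cast_id]
    | succ n' hle ih =>
      have e1 : ZMod.castHom (pow_dvd_pow 2 (hmle (Nat.le_succ_of_le hle)))
            (ZMod (2 ^ m n)) (d (n' + 1) x) =
          ZMod.castHom (pow_dvd_pow 2 (hmle hle)) (ZMod (2 ^ m n))
            (ZMod.castHom (pow_dvd_pow 2 (hmono n')) (ZMod (2 ^ m n')) (d (n' + 1) x)) := by
        rw [← RingHom.comp_apply, ZMod.castHom_comp]
      rw [e1, hd_step n' x, ih]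
  have hd_surj : ∀ n (a : ZMod (2 ^ m n)), ∃ x : H, d n x = a := by
    intro n a
    obtain ⟨x, hx⟩ := hc_surj n (c n h₀ * a)
    refine ⟨x, ?_⟩
    have e1 : d n x = Ring.inverse (c n h₀) * c n x := rfl
    rw [e1, hx, ← mul_assoc, Ring.inverse_mul_cancel _ (hh₀ n), one_mul]
  have hd_add : ∀ n (x y : H), d n (x * y) = d n x + d n y := by
    intro n x y
    have e1 : d n (x * y) = Ring.inverse (c n h₀) * c n (x * y) := rfl
    rw [e1, hc_add n x y, mul_add]
  have hd_zero : ∀ n (x : H), d n x = 0 ↔ x.1 ∈ N n := by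
    intro n x
    rw [← hc_zero_iff n x]
    have e1 : d n x = Ring.inverse (c n h₀) * c n x := rfl
    constructor
    · intro h
      have h1 : c n h₀ * d n x = 0 := by rw [h, mul_zero]
      rw [e1, ← mul_assoc, Ring.mul_inverse_cancel _ (hh₀ n), one_mul] at h1
      exact h1
    · intro h
      rw [e1, h, mul_zero]
  -- the stages and the maps to `ZMod (2 ^ k)`
  choose s hs using fun k : ℕ => (hm.eventually_ge_atTop k).exists
  set b : ∀ k, H → ZMod (2 ^ k) := fun k x =>
    ZMod.castHom (pow_dvd_pow 2 (hs k)) (ZMod (2 ^ k)) (d (s k) x) with hb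
  have hb_indep : ∀ (k n : ℕ) (hn : k ≤ m n) (x : H),
      b k x = ZMod.castHom (pow_dvd_pow 2 hn) (ZMod (2 ^ k)) (d n x) := by
    intro k n hn x
    have e1 : b k x = ZMod.castHom (pow_dvd_pow 2 (hs k)) (ZMod (2 ^ k)) (d (s k) x) := rfl
    rcases le_total n (s k) with h | h
    · rw [e1, ← hd_le h x, ← RingHom.comp_apply, ZMod.castHom_comp]
    · rw [e1, ← hd_le h x, ← RingHom.comp_apply, ZMod.castHom_comp]
  have hb_compat : ∀ (j k : ℕ) (h : j ≤ k) (x : H),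
      ZMod.castHom (pow_dvd_pow 2 h) (ZMod (2 ^ j)) (b k x) = b j x := by
    intro j k h x
    have e1 : b k x = ZMod.castHom (pow_dvd_pow 2 (hs k)) (ZMod (2 ^ k)) (d (s k) x) := rfl
    rw [hb_indep j (s k) (h.trans (hs k)) x, e1, ← RingHom.comp_apply, ZMod.castHom_comp]
  have hb_add : ∀ k (x y : H), b k (x * y) = b k x + b k y := by
    intro k x y
    have e1 : ∀ z : H, b k z =
        ZMod.castHom (pow_dvd_pow 2 (hs k)) (ZMod (2 ^ k)) (d (s k) z) := fun z => rfl
    rw [e1, e1, e1, hd_add, map_add]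
  have hb_surj : ∀ k (v : ZMod (2 ^ k)), ∃ x : H, b k x = v := by
    intro k v
    obtain ⟨x, hx⟩ := hd_surj (s k) ((v.val : ZMod (2 ^ m (s k))))
    refine ⟨x, ?_⟩
    have e1 : b k x = ZMod.castHom (pow_dvd_pow 2 (hs k)) (ZMod (2 ^ k)) (d (s k) x) := rfl
    haveI : NeZero (2 ^ k) := ⟨pow_ne_zero _ two_ne_zero⟩
    rw [e1, hx, map_natCast, ZMod.natCast_val, ZMod.cast_id]
  have hb_zero : ∀ x : H, (∀ k, b k x = 0) → x = 1 := by
    intro x hx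
    have hNall : ∀ n, x.1 ∈ N n := by
      intro n
      have h1 := hb_indep (m n) n le_rfl x
      rw [hx (m n), ZMod.castHom_apply, ZMod.cast_id] at h1
      exact (hd_zero n x).mp h1.symm
    have hmem : x.1 ∈ (⨅ n, N n) := Subgroup.mem_iInf.mpr hNall
    rw [hinter, Subgroup.mem_bot] at hmem
    exact Subtype.ext hmem
  have hb_loc : ∀ k (x y : H), x.1⁻¹ * y.1 ∈ N (s k) → b k x = b k y := by
    intro k x y hxy
    have hz : ((x⁻¹ * y : H) : G) ∈ N (s k) := hxy
    have h0 : d (s k) (x⁻¹ * y) = 0 := (hd_zero _ _).mpr hz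
    have h1 := hd_add (s k) x (x⁻¹ * y)
    rw [mul_inv_cancel_left, h0, add_zero] at h1
    have e1 : ∀ z : H, b k z =
        ZMod.castHom (pow_dvd_pow 2 (hs k)) (ZMod (2 ^ k)) (d (s k) z) := fun z => rfl
    rw [e1, e1, h1]
  -- fibers of `b` are clopen
  have hbopen : ∀ k (P : ZMod (2 ^ k) → Prop), IsOpen {x : H | P (b k x)} := by
    intro k P
    have : {x : H | P (b k x)} =
        {x : H | (fun w => P (ZMod.castHom (pow_dvd_pow 2 (hs k)) (ZMod (2 ^ k))
          (Ring.inverse (c (s k) h₀) * w))) (c (s k) x)} := rfl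
    rw [this]
    exact hCopen (s k) (fun w => P (ZMod.castHom (pow_dvd_pow 2 (hs k)) (ZMod (2 ^ k))
      (Ring.inverse (c (s k) h₀) * w)))
  have hbclosed : ∀ k (P : ZMod (2 ^ k) → Prop), IsClosed {x : H | P (b k x)} := by
    intro k P
    rw [← isOpen_compl_iff]
    exact hbopen k fun v => ¬ P v
  -- the lift to ℤ_[2]
  set Θ : H → ℤ_[2] := fun x =>
    zmodLimitLift ⟨fun k => b k x, fun j k h => hb_compat j k h x⟩ with hΘdef
  have hΘspec : ∀ (k : ℕ) (x : H), PadicInt.toZModPow k (Θ x) = b k x := by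
    intro k x
    exact zmodLimitLift_spec k _
  have hΘadd : ∀ x y : H, Θ (x * y) = Θ x + Θ y := by
    intro x y
    rw [← PadicInt.ext_of_toZModPow]
    intro k
    rw [map_add, hΘspec, hΘspec, hΘspec, hb_add]
  have hΘinj : Function.Injective Θ := by
    intro x y hxy
    have hz : ∀ k, b k (x * y⁻¹) = 0 := by
      intro k
      have h1 := hb_add k (x * y⁻¹) y
      rw [inv_mul_cancel_right] at h1
      have h2 : b k x = b k y := by rw [← hΘspec k x, ← hΘspec k y, hxy]
      rw [h2] at h1
      exact (right_eq_add.mp h1)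
    have := hb_zero _ hz
    exact mul_inv_eq_one.mp this
  have hΘsurj : Function.Surjective Θ := by
    intro y
    have key : (⋂ k, {x : H | b k x = PadicInt.toZModPow k y}).Nonempty := by
      apply IsCompact.nonempty_iInter_of_sequence_nonempty_isCompact_isClosed
      · intro k z hz
        simp only [Set.mem_setOf_eq] at hz ⊢
        rw [← hb_compat k (k + 1) (Nat.le_succ k) z, hz, ZMod.castHom_apply,
          PadicInt.cast_toZModPow k (k + 1) (Nat.le_succ k) y]
      · intro k
        obtain ⟨x0, hx0⟩ := hb_surj k (PadicInt.toZModPow k y)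
        exact ⟨x0, hx0⟩
      · exact (hbclosed 0 fun v => v = PadicInt.toZModPow 0 y).isCompact
      · intro k
        exact hbclosed k fun v => v = PadicInt.toZModPow k y
    obtain ⟨x, hx⟩ := key
    refine ⟨x, PadicInt.ext_of_toZModPow.mp fun k => ?_⟩
    rw [hΘspec]
    exact Set.mem_iInter.mp hx k
  have hΘcont : Continuous Θ := by
    rw [continuous_iff_continuousAt]
    intro x
    rw [ContinuousAt, Metric.tendsto_nhds]
    intro ε hε
    obtain ⟨k, hk⟩ := PadicInt.exists_pow_neg_lt 2 hε
    have hUopen : IsOpen ((Subtype.val : H → G) ⁻¹' (x.1 • (N (s k) : Set G))) :=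
      ((hopen (s k)).smul x.1).preimage continuous_subtype_val
    refine Filter.eventually_of_mem (hUopen.mem_nhds ?_) ?_
    · show x.1 ∈ x.1 • (N (s k) : Set G)
      rw [Set.mem_smul_set_iff_inv_smul_mem]
      simpa using (N (s k)).one_mem
    · rintro y hy
      have hy' : x.1⁻¹ * y.1 ∈ N (s k) := by
        have := Set.mem_smul_set_iff_inv_smul_mem.mp hy
        simpa using this
      have hbb : b k y = b k x := (hb_loc k x y hy').symm
      have hmem : Θ y - Θ x ∈ RingHom.ker (PadicInt.toZModPow k) := by
        rw [RingHom.mem_ker, map_sub, hΘspec, hΘspec, hbb, sub_self]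
      rw [PadicInt.ker_toZModPow] at hmem
      have hnorm : ‖Θ y - Θ x‖ ≤ (2 : ℝ) ^ (-(k : ℤ)) :=
        (PadicInt.norm_le_pow_iff_mem_span_pow _ k).mpr hmem
      rw [dist_eq_norm]
      exact lt_of_le_of_lt hnorm hk
  -- assemble the multiplicative equivalence
  have hΘone : Θ 1 = 0 := by
    have h1 := hΘadd 1 1
    rw [mul_one] at h1
    exact (left_eq_add.mp h1)
  set Θmon : H →* Multiplicative ℤ_[2] :=
    { toFun := fun x => Multiplicative.ofAdd (Θ x)
      map_one' := by
        show Multiplicative.ofAdd (Θ 1) = Multiplicative.ofAdd 0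
        rw [hΘone]
      map_mul' := fun x y => by
        show Multiplicative.ofAdd (Θ (x * y)) = Multiplicative.ofAdd (Θ x + Θ y)
        rw [hΘadd] } with hΘmon
  have hbij : Function.Bijective Θmon := by
    constructor
    · intro a b h
      exact hΘinj (Multiplicative.ofAdd.injective h)
    · intro z
      obtain ⟨x, hx⟩ := hΘsurj (Multiplicative.toAdd z)
      exact ⟨x, by simp [hΘmon, hx]⟩
  set e : H ≃* Multiplicative ℤ_[2] := MulEquiv.ofBijective Θmon hbij with he
  have hecont : Continuous e := by
    show Continuous fun x : H => Multiplicative.ofAdd (Θ x)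
    exact continuous_ofAdd.comp hΘcont
  haveI : T2Space (Multiplicative ℤ_[2]) := inferInstanceAs (T2Space ℤ_[2])
  have hesymm : Continuous e.symm := by
    have h := (Continuous.homeoOfEquivCompactToT2 (f := e.toEquiv) hecont).symm.continuous
    exact h
  refine ⟨H, hHopen, ?_, e, hecont, hesymm⟩
  intro x y
  apply hΘinj
  rw [hΘadd, hΘadd, add_comm]

end Z2DihedralAux

/-- Let `G` be a profinite group and `(N n)` a decreasing sequence of open normal subgroups
with trivial intersection such that `G ⧸ N n` is dihedral of order `2 ^ (m n + 1)` (encoded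
by a surjection `G →* DihedralGroup (2 ^ m n)` with kernel `N n`) where `m n → ∞`. Then `G`
has an open abelian subgroup topologically isomorphic to the additive group `ℤ₂` of
`2`-adic integers. -/
theorem open_Z2_subgroup_of_dihedral_quotients (G : Type*) [Group G] [TopologicalSpace G]
    [IsTopologicalGroup G] [CompactSpace G] [T2Space G] [TotallyDisconnectedSpace G]
    (N : ℕ → Subgroup G) (hopen : ∀ n, IsOpen (N n : Set G))
    (hnormal : ∀ n, (N n).Normal) (hanti : ∀ n, N (n + 1) ≤ N n)
    (hinter : (⨅ n : ℕ, N n) = ⊥) (m : ℕ → ℕ)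
    (hdihedral : ∀ n, ∃ φ : G →* DihedralGroup (2 ^ m n),
      Function.Surjective φ ∧ φ.ker = N n)
    (hm : Tendsto m atTop atTop) :
    ∃ U : Subgroup G, IsOpen (U : Set G) ∧ (∀ x y : U, x * y = y * x) ∧
      ∃ e : U ≃* Multiplicative ℤ_[2], Continuous e ∧ Continuous e.symm := by
  obtain ⟨n0, hn0⟩ := Filter.eventually_atTop.mp (hm.eventually_ge_atTop 2)
  have hA : Antitone N := antitone_nat_of_succ_le hanti
  refine Z2DihedralAux.aux G (fun n => N (n + n0)) (fun n => hopen (n + n0)) ?_ ?_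
    (fun n => m (n + n0)) (fun n => hdihedral (n + n0))
    (hm.comp (tendsto_add_atTop_nat n0)) (fun n => hn0 (n + n0) (Nat.le_add_left n0 n))
  · intro n
    show N (n + 1 + n0) ≤ N (n + n0)
    have he : n + 1 + n0 = n + n0 + 1 := by omega
    rw [he]
    exact hanti (n + n0)
  · refine le_antisymm ?_ bot_le
    rw [← hinter]
    exact le_iInf fun k => (iInf_le (fun n => N (n + n0)) k).trans (hA (Nat.le_add_right k n0))
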